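/- Let n ≥ 2 be an integer, let x_1 = 0 and let x_2, ..., x_n be arbitrary real numbers. Then for any α > 0: ( Σ_{i=1}^n x_i e^{−α x_i} ) / ( Σ_{j=1}^n e^{−α x_j} ) ≤ ln(n)/α. -/

import Mathlib

open Real Finset

lemma aux_mul_exp_le (α : ℝ) (hα : 0 < α) (t : ℝ) :
    t * Real.exp (-α * t) ≤ 1 / (α * Real.exp 1) := by
  have h := Real.add_one_le_exp (α * t - 1)
  have h1 : Real.exp (α * t - 1) = Real.exp (α * t) / Real.exp 1 := Real.exp_sub _ _
  have h2 : Real.exp (-α * t) = 1 / Real.exp (α * t) := by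
    rw [neg_mul, Real.exp_neg]; ring
  have hp : (0:ℝ) < Real.exp (α * t) := Real.exp_pos _
  have he : (0:ℝ) < Real.exp 1 := Real.exp_pos _
  rw [h2, mul_one_div, div_le_div_iff₀ (by positivity) (by positivity)]
  rw [h1] at h
  have : α * t ≤ Real.exp (α * t) / Real.exp 1 := by linarith
  have h3 : α * t * Real.exp 1 ≤ Real.exp (α * t) := (le_div_iff₀ he).mp this
  nlinarith [h3]

/-- The exponential-weights (Gibbs) average of values `x i` with `x 0 = 0` is at most
`ln n / α`. -/
theorem gibbs_average_le_log_div (n : ℕ) (hn : 2 ≤ n) (x : Fin n → ℝ) (hx1 : x ⟨0, by omega⟩ = 0)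
    (α : ℝ) (hα : 0 < α) :
    (∑ i, x i * Real.exp (-α * x i)) / (∑ j, Real.exp (-α * x j)) ≤ Real.log n / α := by
  set c : ℝ := Real.log n / α with hc
  have hZ : 0 < ∑ j, Real.exp (-α * x j) := by
    apply Finset.sum_pos (fun j _ => Real.exp_pos _)
    exact ⟨⟨0, by omega⟩, Finset.mem_univ _⟩
  rw [div_le_iff₀ hZ]
  have hnpos : (0:ℝ) < n := by positivity
  have hexp_c : Real.exp (-α * c) = 1 / n := by
    have : -α * c = -Real.log n := by rw [hc]; field_simp
    rw [this, Real.exp_neg, Real.exp_log hnpos, one_div]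
  set i0 : Fin n := ⟨0, by omega⟩ with hi0
  have key : ∑ i, (x i - c) * Real.exp (-α * x i) ≤ 0 := by
    rw [← Finset.add_sum_erase _ _ (Finset.mem_univ i0)]
    have h0 : (x i0 - c) * Real.exp (-α * x i0) = -c := by
      rw [hx1]; simp
    rw [h0]
    have hbound : ∀ i ∈ Finset.univ.erase i0,
        (x i - c) * Real.exp (-α * x i) ≤ (1 / (α * Real.exp 1)) * (1 / n) := by
      intro i _
      have hsplit : Real.exp (-α * x i) = Real.exp (-α * (x i - c)) * Real.exp (-α * c) := by
        rw [← Real.exp_add]; ring_nf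
      rw [hsplit, hexp_c, ← mul_assoc]
      apply mul_le_mul_of_nonneg_right _ (by positivity)
      exact aux_mul_exp_le α hα (x i - c)
    have hsum := Finset.sum_le_sum hbound
    have hcard : ((Finset.univ.erase i0).card : ℝ) ≤ n := by
      have := Finset.card_erase_le (a := i0) (s := (Finset.univ : Finset (Fin n)))
      have h2 : (Finset.univ : Finset (Fin n)).card = n := Finset.card_univ.trans (Fintype.card_fin n)
      exact_mod_cast le_trans this (le_of_eq h2)
    rw [Finset.sum_const, nsmul_eq_mul] at hsum
    have he : (0:ℝ) < Real.exp 1 := Real.exp_pos _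
    have hbnd : ((Finset.univ.erase i0).card : ℝ) * ((1 / (α * Real.exp 1)) * (1 / n)) ≤ 1 / (α * Real.exp 1) := by
      rw [mul_comm, mul_assoc]
      have : ((Finset.univ.erase i0).card : ℝ) * (1 / n) ≤ 1 := by
        rw [mul_one_div]
        exact div_le_one_of_le₀ hcard (le_of_lt hnpos)
      nlinarith [one_div_pos.mpr (mul_pos hα he)]
    have hce : 1 / (α * Real.exp 1) ≤ c := by
      rw [hc, one_div, div_eq_mul_inv, mul_inv]
      rw [mul_comm α⁻¹]
      apply mul_le_mul_of_nonneg_right _ (by positivity)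
      have h2n : Real.log 2 ≤ Real.log n := Real.log_le_log (by norm_num) (by exact_mod_cast hn)
      have hl2 : (0.6931471803 : ℝ) < Real.log 2 := Real.log_two_gt_d9
      have hegt : (2.7182818283 : ℝ) < Real.exp 1 := Real.exp_one_gt_d9
      have : (Real.exp 1)⁻¹ < 0.6931471803 := by
        rw [inv_lt_comm₀ (by linarith) (by norm_num)]
        nlinarith
      linarith
    linarith
  have hexpand : ∑ i, (x i - c) * Real.exp (-α * x i)
      = (∑ i, x i * Real.exp (-α * x i)) - c * ∑ j, Real.exp (-α * x j) := by
    rw [Finset.mul_sum, ← Finset.sum_sub_distrib]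
    congr 1; ext i; ring
  rw [hexpand] at key
  linarith
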